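/- Let (M, d, 0) be a nontrivial finite pointed p-metric space with p ∈ (0,1], and suppose d(x, 0) = d(x, M \ {x}) for every x ∈ M \ {0}. Then for every a ∈ [0,∞)^{M\{0}} and every rooted spanning tree T on M with root 0, we have sum_{x ∈ M\{0}} ( d(e_x^T) · sum_{y ∈ V_x^T} a_y )^p ≥ sum_{x ∈ M\{0}} (d(x,0) a_x)^p, where e_x^T = {pred_T(x), x} and V_x^T is the vertex set of the subtree of T rooted at x. -/
import Mathlib


open scoped Classical

/-- if in a nontrivial finite pointed `p`-metric space the base
point is a nearest point of every `x ≠ 0`, then for every nonnegative family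
of coefficients and every rooted spanning tree `T` on `M` with root `0`
(encoded by its parent function `par`), the tree evaluation dominates
`∑ (d(x,0) a_x)^p`.  Here `V_x^T = {y | ∃ k, par^[k] y = x}` is the subtree
rooted at `x` and `d(e_x^T) = d(par x, x)`. -/
theorem stmt_11 (p : ℝ) (hp0 : 0 < p) (hp1 : p ≤ 1)
    {M : Type*} [Fintype M] [DecidableEq M] [Nontrivial M] (base : M)
    (d : M → M → ℝ)
    (hsym : ∀ u v, d u v = d v u) (hdiag : ∀ u, d u u = 0)
    (hpos : ∀ u v, u ≠ v → 0 < d u v)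
    (htri : ∀ u v w, d u w ^ p ≤ d u v ^ p + d v w ^ p)
    (hnear : ∀ x, x ≠ base → ∀ y, y ≠ x → d x base ≤ d x y)
    (a : M → ℝ) (hann : ∀ x, 0 ≤ a x) (habase : a base = 0)
    (par : M → M) (hpar0 : par base = base)
    (hreach : ∀ x, ∃ k, par^[k] x = base) :
    ∑ x ∈ Finset.univ.erase base,
        (d (par x) x * ∑ y ∈ Finset.univ.filter (fun y => ∃ k, par^[k] y = x), a y) ^ p
      ≥ ∑ x ∈ Finset.univ.erase base, (d x base * a x) ^ p := by
  apply Finset.sum_le_sum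
  intro x hx
  have hxb : x ≠ base := Finset.ne_of_mem_erase hx
  have hparx : par x ≠ x := by
    intro h
    obtain ⟨k, hk⟩ := hreach x
    have hfix : par^[k] x = x := Function.iterate_fixed h k
    exact hxb (hfix ▸ hk)
  have h1 : d x base ≤ d (par x) x := by
    rw [hsym (par x) x]; exact hnear x hxb (par x) hparx
  have h2 : a x ≤ ∑ y ∈ Finset.univ.filter (fun y => ∃ k, par^[k] y = x), a y := by
    apply Finset.single_le_sum (fun i _ => hann i)
    simp only [Finset.mem_filter, Finset.mem_univ, true_and]
    exact ⟨0, rfl⟩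
  have hd0 : 0 ≤ d x base := (hpos x base hxb).le
  exact Real.rpow_le_rpow (mul_nonneg hd0 (hann x))
    (mul_le_mul h1 h2 (hann x) (le_trans hd0 h1)) hp0.le
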